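/- In F_q[V_1, …, V_h], D = (−1)^{h−1} ( (V_h^{q^h} − V_h) + B_h + Σ_{i=1}^{h−1} V_i^{q^h} B_{h−i}^{q^i} ), where D is the determinant of the h×h matrix whose first row is (V_1^{q^h} − V_1, …, V_h^{q^h} − V_h) and whose (i,j) entry for 2 ≤ i ≤ h is V_{j−i+1}^{q^{i−1}} (conventions V_0 = 1, V_j = 0 for j < 0). In particular, the hypersurface of Theorem 1.1 is defined by an Artin–Schreier equation in V_h over F_q[V_1, …, V_{h−1}]. -/

import Mathlib

open Finset

noncomputable section

/-- The `(a,b)` entry (0-based) of the matrix `M(W)`, whose 1-based `(i,j)` entry is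
`W_{j−i+1}^{q^{i−1}}`, with the convention that entries with negative index vanish. -/
def entryM (q : ℕ) {R : Type*} [CommRing R] (W : ℕ → R) (a b : ℕ) : R :=
  if a ≤ b + 1 then W (b + 1 - a) ^ q ^ a else 0

/-- `δ_i(W) := (−1)^i` times the determinant of the top-left `i×i` submatrix of `M(W)`. -/
def deltaM (q : ℕ) {R : Type*} [CommRing R] (W : ℕ → R) (i : ℕ) : R :=
  (-1) ^ i * Matrix.det (Matrix.of fun a b : Fin i => entryM q W a b)

/-- The tuple `(V₁, …, V_{h−1})` of variables, extended by `V₀ = 1` and `V_j = 0`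
for `j ≥ h`. -/
def vTuple (K : Type*) [Field K] (h : ℕ) : ℕ → MvPolynomial ℕ K := fun j =>
  if j = 0 then 1 else if j ≤ h - 1 then MvPolynomial.X j else 0

/-- The matrix whose first row is `(V₁^{q^h} − V₁, …, V_h^{q^h} − V_h)` and whose
`(i,j)` entry for `2 ≤ i ≤ h` is `V_{j−i+1}^{q^{i−1}}` (with `V₀ = 1`, `V_j = 0` for
`j < 0`); `D` is its determinant. -/
def matD (q : ℕ) (K : Type*) [Field K] (h : ℕ) :
    Matrix (Fin h) (Fin h) (MvPolynomial ℕ K) :=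
  Matrix.of fun a b =>
    if (a : ℕ) = 0 then
      MvPolynomial.X ((b : ℕ) + 1) ^ q ^ h - MvPolynomial.X ((b : ℕ) + 1)
    else entryM q (vTuple K h) a b

section Aux
variable {R : Type*} [CommRing R]

lemma coe_succAbove' {m : ℕ} (j : Fin (m+1)) (t : Fin m) :
    ((j.succAbove t : Fin (m+1)) : ℕ) = if (t:ℕ) < (j:ℕ) then (t:ℕ) else (t:ℕ)+1 := by
  rw [Fin.succAbove]
  split_ifs with h1 h2 h2 <;> simp_all [Fin.lt_def]

lemma det_block (p e q : ℕ) (hp : p.Prime) (hq : q = p ^ e)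
    [CharP R p] (W : ℕ → R) (hW0 : W 0 = 1) (b k : ℕ) :
    Matrix.det (Matrix.of fun s t : Fin (b + k) =>
        entryM q W ((s:ℕ)+1) (if (t:ℕ) < b then (t:ℕ) else (t:ℕ)+1))
      = Matrix.det (Matrix.of fun a c : Fin k => entryM q W a c) ^ q ^ (b+1) := by
  haveI := Fact.mk hp
  set φ : R →+* R := iterateFrobenius R p (e*(b+1)) with hφdef
  have hφx : ∀ x : R, φ x = x ^ q ^ (b+1) := fun x => by
    rw [hφdef, iterateFrobenius_def, hq, ← pow_mul]
  rw [← Matrix.det_submatrix_equiv_self finSumFinEquiv]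
  have hsub : ((Matrix.of fun s t : Fin (b + k) =>
        entryM q W ((s:ℕ)+1) (if (t:ℕ) < b then (t:ℕ) else (t:ℕ)+1)).submatrix
        finSumFinEquiv finSumFinEquiv)
      = Matrix.fromBlocks
          (Matrix.of fun i j : Fin b => entryM q W ((i:ℕ)+1) (j:ℕ))
          (Matrix.of fun (i : Fin b) (j : Fin k) => entryM q W ((i:ℕ)+1) (b+(j:ℕ)+1))
          0
          ((Matrix.of fun i j : Fin k => entryM q W (i:ℕ) (j:ℕ)).map φ) := by
    ext i j
    rcases i with i | i <;> rcases j with j | j <;>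
      simp only [Matrix.submatrix_apply, Matrix.of_apply, finSumFinEquiv_apply_left,
        finSumFinEquiv_apply_right, Fin.coe_castAdd, Fin.coe_natAdd,
        Matrix.fromBlocks_apply₁₁, Matrix.fromBlocks_apply₁₂, Matrix.fromBlocks_apply₂₁,
        Matrix.fromBlocks_apply₂₂, Matrix.map_apply]
    · rw [if_pos j.is_lt]
    · rw [if_neg (by omega)]
    · rw [if_pos j.is_lt, entryM, if_neg (by omega)]
      rfl
    · rw [if_neg (by omega)]
      show entryM q W (b + (i:ℕ) + 1) (b + (j:ℕ) + 1) = φ (entryM q W (i:ℕ) (j:ℕ))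
      unfold entryM
      rcases le_or_gt ((i:ℕ)) ((j:ℕ)+1) with h | h
      · rw [if_pos (by omega), if_pos h, hφx, ← pow_mul, ← pow_add]
        have h1 : b + (j:ℕ) + 1 + 1 - (b + (i:ℕ) + 1) = (j:ℕ) + 1 - (i:ℕ) := by omega
        have h2 : (i:ℕ) + (b + 1) = b + (i:ℕ) + 1 := by omega
        rw [h1, ← h2]
      · rw [if_neg (by omega), if_neg (by omega), map_zero]
  rw [hsub, Matrix.det_fromBlocks_zero₂₁]
  have hA : Matrix.det (Matrix.of fun i j : Fin b => entryM q W ((i:ℕ)+1) (j:ℕ)) = 1 := by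
    rw [Matrix.det_of_upperTriangular]
    · refine Finset.prod_eq_one fun i _ => ?_
      show entryM q W ((i:ℕ)+1) (i:ℕ) = 1
      rw [entryM, if_pos (by omega)]
      simp [hW0]
    · intro i j hij
      show entryM q W ((i:ℕ)+1) (j:ℕ) = 0
      rw [entryM, if_neg (by simpa using hij)]
  rw [hA, one_mul]
  have := (RingHom.map_det φ (Matrix.of fun i j : Fin k => entryM q W (i:ℕ) (j:ℕ))).symm
  rw [RingHom.mapMatrix_apply] at this
  rw [this, hφx]

end Aux

lemma matD_minor (p e q m : ℕ) (hp : p.Prime) (hq : q = p ^ e)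
    (K : Type*) [Field K] [CharP K p] (j : Fin (m+1)) :
    Matrix.det ((matD q K (m+1)).submatrix Fin.succ j.succAbove)
      = (-1) ^ (m - (j:ℕ)) * deltaM q (vTuple K (m+1)) (m - (j:ℕ)) ^ q ^ ((j:ℕ)+1) := by
  haveI := Fact.mk hp
  have hbk : (j:ℕ) + (m - (j:ℕ)) = m := by omega
  set V := vTuple K (m+1) with hV
  have hV0 : V 0 = 1 := by simp [hV, vTuple]
  have key := det_block p e q hp hq V hV0 (j:ℕ) (m - (j:ℕ))
  have e1 : Matrix.det ((matD q K (m+1)).submatrix Fin.succ j.succAbove)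
      = Matrix.det (((matD q K (m+1)).submatrix Fin.succ j.succAbove).submatrix
          (finCongr hbk) (finCongr hbk)) :=
    (Matrix.det_submatrix_equiv_self (finCongr hbk) _).symm
  rw [e1]
  have e2 : ((matD q K (m+1)).submatrix Fin.succ j.succAbove).submatrix
          (finCongr hbk) (finCongr hbk)
      = Matrix.of fun s t : Fin ((j:ℕ) + (m - (j:ℕ))) =>
          entryM q V ((s:ℕ)+1) (if (t:ℕ) < (j:ℕ) then (t:ℕ) else (t:ℕ)+1) := by
    ext s t
    simp only [Matrix.submatrix_apply, Matrix.of_apply, finCongr_apply, matD]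
    rw [if_neg (by simp), coe_succAbove']
    simp
    rfl
  rw [e2, key]
  have hdet : Matrix.det (Matrix.of fun a c : Fin (m - (j:ℕ)) => entryM q V a c)
      = (-1) ^ (m - (j:ℕ)) * deltaM q V (m - (j:ℕ)) := by
    rw [deltaM, ← mul_assoc, ← pow_add,
      Even.neg_one_pow ⟨m - (j:ℕ), rfl⟩, one_mul]
  rw [hdet, mul_pow]
  congr 1
  set φ : MvPolynomial ℕ K →+* MvPolynomial ℕ K :=
    iterateFrobenius (MvPolynomial ℕ K) p (e*((j:ℕ)+1)) with hφdef
  have hφx : ∀ x : MvPolynomial ℕ K, φ x = x ^ q ^ ((j:ℕ)+1) := fun x => by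
    rw [hφdef, iterateFrobenius_def, hq, ← pow_mul]
  rw [← hφx, map_pow, map_neg, map_one]

/-- `D = (−1)^{h−1}((V_h^{q^h} − V_h) + B_h + Σ_{i=1}^{h−1} V_i^{q^h} B_{h−i}^{q^i})`,
where `B_i = δ_i(V₁, …, V_{h−1})`.  In particular the hypersurface of Theorem 1.1 is
defined by an Artin–Schreier equation in `V_h` over `F_q[V₁, …, V_{h−1}]`. -/
theorem matD_det_artin_schreier
    (p e q h : ℕ) (hp : p.Prime) (he : 1 ≤ e) (hq : q = p ^ e) (hh : 2 ≤ h)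
    (K : Type*) [Field K] [Fintype K] (hK : Fintype.card K = q) :
    Matrix.det (matD q K h)
      = (-1) ^ (h - 1) *
        ((MvPolynomial.X h ^ q ^ h - MvPolynomial.X h)
          + deltaM q (vTuple K h) h
          + ∑ i ∈ Finset.Ico 1 h,
              MvPolynomial.X i ^ q ^ h * deltaM q (vTuple K h) (h - i) ^ q ^ i) := by
  -- get `CharP K p`
  haveI : CharP K p := by
    obtain ⟨n, hn, hcard⟩ := FiniteField.card K (ringChar K)
    have h1 : p ∣ ringChar K ^ (n:ℕ) := by
      rw [← hcard, hK, hq]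
      exact dvd_pow_self p (by omega)
    have h2 := hp.dvd_of_dvd_pow h1
    have h3 : ringChar K = p := ((Nat.prime_dvd_prime_iff_eq hp hn).mp h2).symm
    exact h3 ▸ ringChar.charP K
  obtain ⟨m, rfl⟩ : ∃ m, h = m + 1 := ⟨h - 1, by omega⟩
  set V := vTuple K (m+1) with hVdef
  set B : ℕ → MvPolynomial ℕ K := deltaM q V with hBdef
  set g : ℕ → MvPolynomial ℕ K := fun j => B (m - j) ^ q ^ (j+1) with hgdef
  have hB0 : B 0 = 1 := by simp [hBdef, deltaM]
  have hgm : g m = 1 := by simp [hgdef, hB0]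
  -- termwise simplification of the cofactor expansion
  have hterm : ∀ j : Fin (m+1),
      (-1 : MvPolynomial ℕ K)^(j:ℕ) * matD q K (m+1) 0 j *
        Matrix.det ((matD q K (m+1)).submatrix Fin.succ j.succAbove)
      = (-1)^m * ((MvPolynomial.X ((j:ℕ)+1) ^ q ^ (m+1)
          - MvPolynomial.X ((j:ℕ)+1)) * g (j:ℕ)) := by
    intro j
    rw [matD_minor p e q m hp hq K j]
    have h0 : matD q K (m+1) 0 j
        = MvPolynomial.X ((j:ℕ)+1) ^ q ^ (m+1) - MvPolynomial.X ((j:ℕ)+1) := by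
      simp [matD]
    rw [h0]
    have hs : (-1 : MvPolynomial ℕ K)^(j:ℕ) * (-1)^(m-(j:ℕ)) = (-1)^m := by
      rw [← pow_add]
      congr 1
      omega
    calc (-1 : MvPolynomial ℕ K)^(j:ℕ) *
          (MvPolynomial.X ((j:ℕ)+1) ^ q ^ (m+1) - MvPolynomial.X ((j:ℕ)+1)) *
          ((-1)^(m-(j:ℕ)) * B (m-(j:ℕ)) ^ q ^ ((j:ℕ)+1))
        = ((-1 : MvPolynomial ℕ K)^(j:ℕ) * (-1)^(m-(j:ℕ))) *
          ((MvPolynomial.X ((j:ℕ)+1) ^ q ^ (m+1) - MvPolynomial.X ((j:ℕ)+1)) *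
            B (m-(j:ℕ)) ^ q ^ ((j:ℕ)+1)) := by ring
      _ = _ := by rw [hs]
  -- the value of `B (m+1)` via cofactor expansion of `Mfull`
  have hBm1 : B (m+1) = -∑ j ∈ Finset.range m, MvPolynomial.X (j+1) * g j := by
    have hMfull : Matrix.det (Matrix.of fun a b : Fin (m+1) => entryM q V (a:ℕ) (b:ℕ))
        = (-1)^m * ∑ j ∈ Finset.range m, MvPolynomial.X (j+1) * g j := by
      rw [Matrix.det_succ_row_zero]
      have hsubeq : ∀ j : Fin (m+1),
          ((Matrix.of fun a b : Fin (m+1) => entryM q V (a:ℕ) (b:ℕ)).submatrix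
            Fin.succ j.succAbove) = (matD q K (m+1)).submatrix Fin.succ j.succAbove := by
        intro j
        ext s t
        simp [matD]
        rfl
      have hterm2 : ∀ j : Fin (m+1),
          (-1 : MvPolynomial ℕ K)^(j:ℕ) *
            (Matrix.of fun a b : Fin (m+1) => entryM q V (a:ℕ) (b:ℕ)) 0 j *
            Matrix.det (((Matrix.of fun a b : Fin (m+1) =>
              entryM q V (a:ℕ) (b:ℕ))).submatrix Fin.succ j.succAbove)
          = (-1)^m * (V ((j:ℕ)+1) * g (j:ℕ)) := by
        intro j
        rw [hsubeq j, matD_minor p e q m hp hq K j]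
        have h0 : (Matrix.of fun a b : Fin (m+1) => entryM q V (a:ℕ) (b:ℕ)) 0 j
            = V ((j:ℕ)+1) := by
          simp [entryM]
        rw [h0]
        have hs : (-1 : MvPolynomial ℕ K)^(j:ℕ) * (-1)^(m-(j:ℕ)) = (-1)^m := by
          rw [← pow_add]; congr 1; omega
        calc (-1 : MvPolynomial ℕ K)^(j:ℕ) * V ((j:ℕ)+1) *
              ((-1)^(m-(j:ℕ)) * B (m-(j:ℕ)) ^ q ^ ((j:ℕ)+1))
            = ((-1 : MvPolynomial ℕ K)^(j:ℕ) * (-1)^(m-(j:ℕ))) *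
              (V ((j:ℕ)+1) * B (m-(j:ℕ)) ^ q ^ ((j:ℕ)+1)) := by ring
          _ = _ := by rw [hs]
      rw [Finset.sum_congr rfl (fun j _ => hterm2 j), ← Finset.mul_sum]
      congr 1
      rw [Fin.sum_univ_eq_sum_range (fun j => V (j+1) * g j) (m+1),
        Finset.sum_range_succ]
      have hVm : V (m+1) = 0 := by
        simp [hVdef, vTuple]
      rw [hVm, zero_mul, add_zero]
      refine Finset.sum_congr rfl fun j hj => ?_
      have hj' : j < m := Finset.mem_range.mp hj
      have : V (j+1) = MvPolynomial.X (j+1) := by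
        simp only [hVdef, vTuple]
        rw [if_neg (by omega), if_pos (by omega)]
      rw [this]
    rw [hBdef, deltaM, hMfull, ← mul_assoc, ← pow_add]
    have : (-1 : MvPolynomial ℕ K) ^ (m + 1 + m) = -1 := by
      have : Odd (m + 1 + m) := ⟨m, by omega⟩
      exact Odd.neg_one_pow this
    rw [this, neg_one_mul]
  -- main computation
  rw [Matrix.det_succ_row_zero, Finset.sum_congr rfl (fun j _ => hterm j), ← Finset.mul_sum]
  have hm1 : m + 1 - 1 = m := by omega
  rw [hm1]
  congr 1
  rw [Fin.sum_univ_eq_sum_range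
    (fun j => (MvPolynomial.X (j+1) ^ q ^ (m+1) - MvPolynomial.X (j+1)) * g j) (m+1),
    Finset.sum_range_succ, hgm, mul_one]
  have hsplit : ∀ j ∈ Finset.range m,
      (MvPolynomial.X (j+1) ^ q ^ (m+1) - MvPolynomial.X (j+1)) * g j
      = MvPolynomial.X (j+1) ^ q ^ (m+1) * g j - MvPolynomial.X (j+1) * g j := fun j _ => by
    ring
  rw [Finset.sum_congr rfl hsplit, Finset.sum_sub_distrib]
  have hIco : ∑ i ∈ Finset.Ico 1 (m+1),
      MvPolynomial.X i ^ q ^ (m+1) * deltaM q V (m+1-i) ^ q ^ i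
      = ∑ j ∈ Finset.range m, MvPolynomial.X (j+1) ^ q ^ (m+1) * g j := by
    rw [Finset.sum_Ico_eq_sum_range]
    have hlen : m + 1 - 1 = m := by omega
    rw [hlen]
    refine Finset.sum_congr rfl fun j hj => ?_
    have h2 : m + 1 - (1 + j) = m - j := by omega
    rw [h2]
    have h1 : 1 + j = j + 1 := by omega
    rw [h1]
  rw [hIco, hBm1]
  ring
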